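/- The intertwining relation U L = L T̃ holds as maps from K₁² to K₂, where L(f,g) = d_A* f + d_B* g and T̃ = [[0, -I],[I, 2T]]. -/

import Mathlib

open ContinuousLinearMap

theorem stmt2 {K₁ K₂ : Type*}
    [NormedAddCommGroup K₁] [InnerProductSpace ℂ K₁] [FiniteDimensional ℂ K₁]
    [NormedAddCommGroup K₂] [InnerProductSpace ℂ K₂] [FiniteDimensional ℂ K₂]
    (S : K₂ →L[ℂ] K₂) (hS : IsSelfAdjoint S) (hSu : S ∈ unitary (K₂ →L[ℂ] K₂))
    (dA : K₂ →L[ℂ] K₁) (h : dA ∘L adjoint dA = 1)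
    (dB : K₂ →L[ℂ] K₁) (hdB : dB = dA ∘L S)
    (T : K₁ →L[ℂ] K₁) (hT : T = dA ∘L adjoint dB)
    (U : K₂ →L[ℂ] K₂) (hU : U = S ∘L ((2:ℂ) • (adjoint dA ∘L dA) - 1))
    (L : K₁ × K₁ →L[ℂ] K₂) (hL : ∀ f g : K₁, L (f, g) = adjoint dA f + adjoint dB g)
    (Ttil : K₁ × K₁ →L[ℂ] K₁ × K₁)
    (hTtil : ∀ f g : K₁, Ttil (f, g) = (-g, f + (2:ℂ) • T g)) :
    U ∘L L = L ∘L Ttil := by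
  have hstar : adjoint S = S := hS.adjoint_eq
  have hSS : ∀ v : K₂, S (S v) = v := by
    intro v
    have h1 : S * S = 1 := by
      have := hSu.1
      rwa [star_eq_adjoint, hstar] at this
    have := congrArg (fun M : K₂ →L[ℂ] K₂ => M v) h1
    simpa [mul_apply] using this
  have hA : ∀ v : K₁, dA (adjoint dA v) = v := by
    intro v
    have := congrArg (fun M : K₁ →L[ℂ] K₁ => M v) h
    simpa using this
  have hBadj : ∀ v : K₁, adjoint dB v = S (adjoint dA v) := by
    intro v
    rw [hdB, adjoint_comp, hstar]
    rfl
  apply ContinuousLinearMap.ext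
  rintro ⟨f, g⟩
  rw [comp_apply, comp_apply, hL, hTtil, hL, hU]
  simp only [comp_apply, sub_apply, smul_apply, one_apply, map_add, map_smul,
    map_sub, hBadj, hA, hSS, hT, map_neg]
  simp only [ContinuousLinearMap.one_def, coe_id', id_eq, hSS]
  module
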